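/- Consider the infinite uniform grid with nodes indexed by (m,n) ∈ ℤ² and the nodal values u_{m,n} = mh + α if n is odd and m ≡ 2 (mod 3); u_{m,n} = mh + β if n is odd and m ≢ 2 (mod 3); u_{m,n} = mh + β if n is even and m ≡ 1 (mod 3); u_{m,n} = mh − γ if n is even and m ≢ 1 (mod 3); where h > 0, ε ∈ ℝ, β, γ ∈ ℝ and α = 2β + γ. Then for every node (m,n) the Galerkin residual satisfies ∑_Q a_{(m,n),Q} u_Q = h² + κ (β+γ) ε for some κ ∈ {−5, −3, −1, 1, 2, 6} (depending only on the parity of n and on m mod 3), where the sum runs over the node itself and its six neighbours. In other words, under the constraint α = 2β + γ this three-parameter oscillating function satisfies the Galerkin discretization with right-hand side h² up to a perturbation κ(β+γ)ε. -/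

import Mathlib

noncomputable section

/-- The three-parameter oscillating nodal values on the infinite Grid-4 grid:
`u_{m,n} = mh + α` if `n` is odd and `m ≡ 2 (mod 3)`, `u_{m,n} = mh + β` if `n` is odd and
`m ≢ 2 (mod 3)`, `u_{m,n} = mh + β` if `n` is even and `m ≡ 1 (mod 3)`, and
`u_{m,n} = mh − γ` if `n` is even and `m ≢ 1 (mod 3)`. -/
def uosc (h α β γ : ℝ) (m n : ℤ) : ℝ :=
  (m : ℝ) * h +
    (if Odd n then (if m % 3 = 2 then α else β)
     else (if m % 3 = 1 then β else -γ))

/-- The Galerkin residual `∑_Q a_{(m,n),Q} u_Q` at the node `(m,n)` of the infinite Grid-4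
grid for diffusion `ε`, convection `(1,0)`, `c = 0`: at a node with `n` even the
coefficients of the values at `(m,n−1)`, `(m+1,n)`, `(m,n+1)`, `(m−1,n+1)`, `(m−1,n)`,
`(m−1,n−1)` and at the node itself are `−ε+h/6`, `−ε+h/3`, `−ε+h/6`, `−h/6`, `−ε−h/3`,
`−h/6`, `4ε`; at a node with `n` odd the coefficients of the values at `(m,n+1)`,
`(m+1,n+1)`, `(m+1,n)`, `(m+1,n−1)`, `(m,n−1)`, `(m−1,n)` and at the node itself are
`−ε−h/6`, `h/6`, `−ε+h/3`, `h/6`, `−ε−h/6`, `−ε−h/3`, `4ε`. -/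
def galres (h ε α β γ : ℝ) (m n : ℤ) : ℝ :=
  if Odd n then
    4 * ε * uosc h α β γ m n + (-ε - h / 6) * uosc h α β γ m (n + 1) +
      h / 6 * uosc h α β γ (m + 1) (n + 1) + (-ε + h / 3) * uosc h α β γ (m + 1) n +
      h / 6 * uosc h α β γ (m + 1) (n - 1) + (-ε - h / 6) * uosc h α β γ m (n - 1) +
      (-ε - h / 3) * uosc h α β γ (m - 1) n
  else
    4 * ε * uosc h α β γ m n + (-ε + h / 6) * uosc h α β γ m (n - 1) +
      (-ε + h / 3) * uosc h α β γ (m + 1) n + (-ε + h / 6) * uosc h α β γ m (n + 1) +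
      (-(h / 6)) * uosc h α β γ (m - 1) (n + 1) + (-ε - h / 3) * uosc h α β γ (m - 1) n +
      (-(h / 6)) * uosc h α β γ (m - 1) (n - 1)

/-- Under the constraint `α = 2β + γ`, the three-parameter oscillating function satisfies
the Galerkin discretization with right-hand side `h²` up to a perturbation `κ(β+γ)ε` with
`κ ∈ {−5, −3, −1, 1, 2, 6}`. -/
theorem grid4_three_parameter_oscillation_residual
    (h ε α β γ : ℝ) (hh : 0 < h) (hα : α = 2 * β + γ) :
    ∀ m n : ℤ, ∃ κ : ℝ, κ ∈ ({-5, -3, -1, 1, 2, 6} : Set ℝ) ∧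
      galres h ε α β γ m n = h ^ 2 + κ * (β + γ) * ε := by
  subst hα
  intro m n
  rcases Int.even_or_odd n with he | ho
  · -- n even
    have hno : ¬ Odd n := by simpa [Int.not_odd_iff_even]
    have h1 : Odd (n + 1) := Even.add_one he
    have h2 : Odd (n - 1) := by
      obtain ⟨k, hk⟩ := he; exact ⟨k - 1, by omega⟩
    have hr : m % 3 = 0 ∨ m % 3 = 1 ∨ m % 3 = 2 := by omega
    rcases hr with hr | hr | hr
    · refine ⟨-3, by norm_num, ?_⟩
      have e1 : (m + 1) % 3 = 1 := by omega
      have e2 : (m - 1) % 3 = 2 := by omega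
      simp only [galres, uosc, if_neg hno, if_pos h1, if_pos h2, hr, e1, e2]
      norm_num
      push_cast
      ring
    · refine ⟨2, by norm_num, ?_⟩
      have e1 : (m + 1) % 3 = 2 := by omega
      have e2 : (m - 1) % 3 = 0 := by omega
      simp only [galres, uosc, if_neg hno, if_pos h1, if_pos h2, hr, e1, e2]
      norm_num
      push_cast
      ring
    · refine ⟨-5, by norm_num, ?_⟩
      have e1 : (m + 1) % 3 = 0 := by omega
      have e2 : (m - 1) % 3 = 1 := by omega
      simp only [galres, uosc, if_neg hno, if_pos h1, if_pos h2, hr, e1, e2]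
      norm_num
      push_cast
      ring
  · -- n odd
    have hn : Odd n := ho
    have h1 : ¬ Odd (n + 1) := by
      obtain ⟨k, hk⟩ := ho
      simp [Int.not_odd_iff_even]; exact ⟨k, by omega⟩
    have h2 : ¬ Odd (n - 1) := by
      obtain ⟨k, hk⟩ := ho
      simp [Int.not_odd_iff_even]; exact ⟨k, by omega⟩
    have hr : m % 3 = 0 ∨ m % 3 = 1 ∨ m % 3 = 2 := by omega
    rcases hr with hr | hr | hr
    · refine ⟨1, by norm_num, ?_⟩
      have e1 : (m + 1) % 3 = 1 := by omega
      have e2 : (m - 1) % 3 = 2 := by omega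
      simp only [galres, uosc, if_pos hn, if_neg h1, if_neg h2, hr, e1, e2]
      norm_num
      push_cast
      ring
    · refine ⟨-1, by norm_num, ?_⟩
      have e1 : (m + 1) % 3 = 2 := by omega
      have e2 : (m - 1) % 3 = 0 := by omega
      simp only [galres, uosc, if_pos hn, if_neg h1, if_neg h2, hr, e1, e2]
      norm_num
      push_cast
      ring
    · refine ⟨6, by norm_num, ?_⟩
      have e1 : (m + 1) % 3 = 0 := by omega
      have e2 : (m - 1) % 3 = 1 := by omega
      simp only [galres, uosc, if_pos hn, if_neg h1, if_neg h2, hr, e1, e2]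
      norm_num
      push_cast
      ring


end
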